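/- Let T = inf{n ≥ 0 : X_{n+1} = X_n − 1} be the first time the walk steps left. Then, assuming U and V are i.i.d. symmetric ±1 sequences independent of each other, conditionally on the filtration up to time T and on {T < ∞}, the variable V_{X_T} is uniform on {−1,+1}: P(V_{X_T} = +1, A ∩ {T < ∞}) = (1/2) P(A ∩ {T < ∞}) for every event A in the sigma-algebra 𝓕_T. -/

import Mathlib

open MeasureTheory ProbabilityTheory

/-- The deterministic diagonal walk on the randomly oriented Manhattan lattice. -/
def manhattanWalk (U V : ℤ → ℤ) : ℕ → ℤ × ℤ
  | 0 => (0, 0)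
  | n + 1 =>
      ((manhattanWalk U V n).1 + U (manhattanWalk U V n).2,
       (manhattanWalk U V n).2 + V (manhattanWalk U V n).1)

private lemma meas_comp_countable {Ω : Type*} [MeasurableSpace Ω]
    {f : ℤ → Ω → ℤ} (hf : ∀ x, Measurable (f x)) {g : Ω → ℤ} (hg : Measurable g) :
    Measurable (fun ω => f (g ω) ω) := by
  apply measurable_to_countable'
  intro x
  have h : (fun ω => f (g ω) ω) ⁻¹' {x} = ⋃ z : ℤ, g ⁻¹' {z} ∩ f z ⁻¹' {x} := by
    ext ω
    simp only [Set.mem_preimage, Set.mem_singleton_iff, Set.mem_iUnion, Set.mem_inter_iff]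
    exact ⟨fun h => ⟨g ω, rfl, by rw [← h]⟩, fun ⟨z, hz, h⟩ => by rw [hz]; exact h⟩
  rw [h]
  exact MeasurableSet.iUnion fun z =>
    (hg (measurableSet_singleton z)).inter (hf z (measurableSet_singleton x))

private lemma measurable_manhattanWalk {Ω : Type*} [MeasurableSpace Ω]
    (U V : ℤ → Ω → ℤ) (hU : ∀ y, Measurable (U y)) (hV : ∀ x, Measurable (V x)) (n : ℕ) :
    Measurable (fun ω => manhattanWalk (fun y => U y ω) (fun x => V x ω) n) := by
  induction n with
  | zero => exact measurable_const
  | succ m ih =>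
    have h1 : Measurable (fun ω => (manhattanWalk (fun y => U y ω) (fun x => V x ω) m).1) :=
      measurable_fst.comp ih
    have h2 : Measurable (fun ω => (manhattanWalk (fun y => U y ω) (fun x => V x ω) m).2) :=
      measurable_snd.comp ih
    exact (h1.add (meas_comp_countable hU h2)).prodMk (h2.add (meas_comp_countable hV h1))

private lemma walk_fst_eq (U V : ℤ → ℤ) (hU : ∀ y, U y = 1 ∨ U y = -1) :
    ∀ n : ℕ, (∀ k < n, (manhattanWalk U V (k+1)).1 ≠ (manhattanWalk U V k).1 - 1) →
      (manhattanWalk U V n).1 = n := by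
  intro n
  induction n with
  | zero => intro _; rfl
  | succ m ih =>
    intro h
    have hm := ih (fun k hk => h k (Nat.lt_succ_of_lt hk))
    have hne := h m (Nat.lt_succ_self m)
    have hunf : (manhattanWalk U V (m+1)).1
        = (manhattanWalk U V m).1 + U (manhattanWalk U V m).2 := rfl
    rcases hU (manhattanWalk U V m).2 with h1 | h1
    · rw [hunf, h1, hm]; push_cast; ring
    · exact absurd (by rw [hunf, h1]; ring) hne

private lemma indep_key {Ω : Type*} [MeasurableSpace Ω] (μ : Measure Ω)
    (U V : ℤ → Ω → ℤ)
    (hUmeas : ∀ y, Measurable (U y)) (hVmeas : ∀ x, Measurable (V x))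
    (hindep : iIndepFun (fun i : ℤ ⊕ ℤ => Sum.elim U V i) μ)
    (n : ℕ) (E : Set Ω)
    (hE : MeasurableSet[MeasurableSpace.comap
        (fun ω => ((fun y : Set.Icc (-(n : ℤ)) (n : ℤ) => U y ω),
                   (fun x : Set.Icc (-(n : ℤ)) ((n : ℤ) - 1) => V x ω)))
        inferInstance] E) :
    μ (E ∩ {ω | V (n : ℤ) ω = 1}) = μ E * μ {ω | V (n : ℤ) ω = 1} := by
  classical
  set Sfin : Finset (ℤ ⊕ ℤ) :=
    ((Finset.Icc (-(n:ℤ)) (n:ℤ)).image Sum.inl) ∪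
      ((Finset.Icc (-(n:ℤ)) ((n:ℤ)-1)).image Sum.inr) with hSfin
  set Tfin : Finset (ℤ ⊕ ℤ) := {Sum.inr (n:ℤ)} with hTfin
  have hST : Disjoint Sfin Tfin := by
    rw [Finset.disjoint_singleton_right, hSfin]
    simp only [Finset.mem_union, Finset.mem_image, Finset.mem_Icc]
    rintro (⟨a, _, ha⟩ | ⟨a, ha, ha2⟩)
    · exact absurd ha (by simp)
    · rw [Sum.inr.injEq] at ha2; omega
  have hmeasElim : ∀ i : ℤ ⊕ ℤ, Measurable (Sum.elim U V i) := by
    rintro (y | x)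
    · exact hUmeas y
    · exact hVmeas x
  have hIndep := hindep.indepFun_finset Sfin Tfin hST hmeasElim
  have hmemL : ∀ y : Set.Icc (-(n:ℤ)) (n:ℤ), Sum.inl (y : ℤ) ∈ Sfin := fun y =>
    Finset.mem_union_left _ (Finset.mem_image_of_mem _ (by
      have := y.2; rw [Set.mem_Icc] at this; exact Finset.mem_Icc.mpr this))
  have hmemR : ∀ x : Set.Icc (-(n:ℤ)) ((n:ℤ)-1), Sum.inr (x : ℤ) ∈ Sfin := fun x =>
    Finset.mem_union_right _ (Finset.mem_image_of_mem _ (by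
      have := x.2; rw [Set.mem_Icc] at this; exact Finset.mem_Icc.mpr this))
  set φ : (Sfin → ℤ) →
      ((Set.Icc (-(n:ℤ)) (n:ℤ) → ℤ) × (Set.Icc (-(n:ℤ)) ((n:ℤ)-1) → ℤ)) :=
    fun h => (fun y => h ⟨Sum.inl (y : ℤ), hmemL y⟩, fun x => h ⟨Sum.inr (x : ℤ), hmemR x⟩)
    with hφdef
  have hφ : Measurable φ :=
    (measurable_pi_lambda _ fun y => measurable_pi_apply _).prodMk
      (measurable_pi_lambda _ fun x => measurable_pi_apply _)
  rw [MeasurableSpace.measurableSet_comap] at hE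
  obtain ⟨t, ht, hts⟩ := hE
  have hEeq : E = (fun a (i : Sfin) => Sum.elim U V (i : ℤ ⊕ ℤ) a) ⁻¹' (φ ⁻¹' t) := by
    rw [← hts]; rfl
  have hVeq : {ω | V (n : ℤ) ω = 1}
      = (fun a (i : Tfin) => Sum.elim U V (i : ℤ ⊕ ℤ) a) ⁻¹'
          ((fun h : Tfin → ℤ => h ⟨Sum.inr (n:ℤ), Finset.mem_singleton_self _⟩) ⁻¹' {1}) := rfl
  rw [hEeq, hVeq]
  exact hIndep.measure_inter_preimage_eq_mul _ _ (hφ ht)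
    ((measurable_pi_apply _) (measurableSet_singleton 1))

theorem fresh_coin_at_first_left_step
    {Ω : Type*} [MeasurableSpace Ω] (μ : Measure Ω) [IsProbabilityMeasure μ]
    (U V : ℤ → Ω → ℤ)
    (hUmeas : ∀ y, Measurable (U y)) (hVmeas : ∀ x, Measurable (V x))
    (hU1 : ∀ y, μ {ω | U y ω = 1} = 1/2) (hUm1 : ∀ y, μ {ω | U y ω = -1} = 1/2)
    (hV1 : ∀ x, μ {ω | V x ω = 1} = 1/2) (hVm1 : ∀ x, μ {ω | V x ω = -1} = 1/2)
    (hindep : iIndepFun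
      (fun i : ℤ ⊕ ℤ => Sum.elim U V i) μ)
    (Z : Ω → ℕ → ℤ × ℤ)
    (hZ : ∀ ω n, Z ω n = manhattanWalk (fun y => U y ω) (fun x => V x ω) n)
    (firstLeft : ℕ → Ω → Prop)
    (hfirstLeft : ∀ n ω, firstLeft n ω ↔
      ((Z ω (n+1)).1 = (Z ω n).1 - 1 ∧ ∀ k < n, (Z ω (k+1)).1 ≠ (Z ω k).1 - 1))
    (A : Set Ω)
    (hA : ∀ n : ℕ,
      MeasurableSet[MeasurableSpace.comap
        (fun ω => ((fun y : Set.Icc (-(n : ℤ)) (n : ℤ) => U y ω),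
                   (fun x : Set.Icc (-(n : ℤ)) ((n : ℤ) - 1) => V x ω)))
        inferInstance]
      (A ∩ {ω | firstLeft n ω})) :
    μ ({ω | ∃ n, firstLeft n ω ∧ V (Z ω n).1 ω = 1} ∩ A)
      = (1/2) * μ ({ω | ∃ n, firstLeft n ω} ∩ A) := by
  classical
  -- measurability of the walk
  have hZmeas : ∀ n, Measurable (fun ω => Z ω n) := by
    intro n
    have h : (fun ω => Z ω n)
        = fun ω => manhattanWalk (fun y => U y ω) (fun x => V x ω) n :=
      funext fun ω => hZ ω n
    rw [h]; exact measurable_manhattanWalk U V hUmeas hVmeas n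
  set E : ℕ → Set Ω := fun n => A ∩ {ω | firstLeft n ω} with hEdef
  have hEmeas : ∀ n, MeasurableSet (E n) := by
    intro n
    have hP : Measurable (fun ω : Ω =>
        ((fun y : Set.Icc (-(n : ℤ)) (n : ℤ) => U y ω),
         (fun x : Set.Icc (-(n : ℤ)) ((n : ℤ) - 1) => V x ω))) :=
      (measurable_pi_lambda
          (fun ω (y : Set.Icc (-(n : ℤ)) (n : ℤ)) => U (y : ℤ) ω) fun y => hUmeas _).prodMk
        (measurable_pi_lambda
          (fun ω (x : Set.Icc (-(n : ℤ)) ((n : ℤ) - 1)) => V (x : ℤ) ω) fun x => hVmeas _)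
    have := hA n
    rw [MeasurableSpace.measurableSet_comap] at this
    obtain ⟨t, ht, hts⟩ := this
    show MeasurableSet (A ∩ {ω | firstLeft n ω})
    rw [← hts]
    exact hP ht
  have hVZmeas : ∀ n, MeasurableSet {ω | V (Z ω n).1 ω = 1} := fun n =>
    (meas_comp_countable hVmeas (measurable_fst.comp (hZmeas n))) (measurableSet_singleton 1)
  set F : ℕ → Set Ω := fun n => E n ∩ {ω | V (Z ω n).1 ω = 1} with hFdef
  have hFmeas : ∀ n, MeasurableSet (F n) := fun n => (hEmeas n).inter (hVZmeas n)
  -- decompositions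
  have hLeq : {ω | ∃ n, firstLeft n ω ∧ V (Z ω n).1 ω = 1} ∩ A = ⋃ n, F n := by
    ext ω
    simp only [Set.mem_inter_iff, Set.mem_setOf_eq, Set.mem_iUnion, hFdef, hEdef]
    constructor
    · rintro ⟨⟨n, h1, h2⟩, hAω⟩; exact ⟨n, ⟨hAω, h1⟩, h2⟩
    · rintro ⟨n, ⟨hAω, h1⟩, h2⟩; exact ⟨⟨n, h1, h2⟩, hAω⟩
  have hReq : {ω | ∃ n, firstLeft n ω} ∩ A = ⋃ n, E n := by
    ext ω
    simp only [Set.mem_inter_iff, Set.mem_setOf_eq, Set.mem_iUnion, hEdef]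
    constructor
    · rintro ⟨⟨n, h1⟩, hAω⟩; exact ⟨n, hAω, h1⟩
    · rintro ⟨n, hAω, h1⟩; exact ⟨⟨n, h1⟩, hAω⟩
  -- pairwise disjointness
  have hEdisj : Pairwise (Function.onFun Disjoint E) := by
    intro n m hnm
    rw [Function.onFun, Set.disjoint_left]
    rintro ω ⟨_, hfn⟩ ⟨_, hfm⟩
    obtain ⟨hn1, hn2⟩ := (hfirstLeft n ω).1 hfn
    obtain ⟨hm1, hm2⟩ := (hfirstLeft m ω).1 hfm
    rcases lt_trichotomy n m with h | h | h
    · exact hm2 n h hn1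
    · exact hnm h
    · exact hn2 m h hm1
  have hFdisj : Pairwise (Function.onFun Disjoint F) := fun n m hnm =>
    (hEdisj hnm).mono Set.inter_subset_left Set.inter_subset_left
  -- the almost sure good set
  set G : Set Ω := {ω | ∀ y : ℤ, U y ω = 1 ∨ U y ω = -1} with hGdef
  have hGc : μ Gᶜ = 0 := by
    have hsub : Gᶜ ⊆ ⋃ y : ℤ, ({ω | U y ω = 1} ∪ {ω | U y ω = -1})ᶜ := by
      intro ω hω
      simp only [hGdef, Set.mem_compl_iff, Set.mem_setOf_eq, not_forall] at hω
      obtain ⟨y, hy⟩ := hω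
      push_neg at hy
      simp only [Set.mem_iUnion, Set.mem_compl_iff, Set.mem_union, Set.mem_setOf_eq]
      exact ⟨y, by tauto⟩
    refine measure_mono_null hsub (measure_iUnion_null fun y => ?_)
    have hmeas : MeasurableSet ({ω | U y ω = 1} ∪ {ω | U y ω = -1}) :=
      ((hUmeas y) (measurableSet_singleton 1)).union ((hUmeas y) (measurableSet_singleton (-1)))
    rw [prob_compl_eq_zero_iff hmeas]
    have hdisj : Disjoint {ω | U y ω = 1} {ω | U y ω = -1} := by
      rw [Set.disjoint_left]; intro ω h1 h2
      simp only [Set.mem_setOf_eq] at h1 h2; omega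
    rw [measure_union hdisj ((hUmeas y) (measurableSet_singleton (-1))), hU1, hUm1]
    rw [ENNReal.div_add_div_same, one_add_one_eq_two]
    exact ENNReal.div_self two_ne_zero ENNReal.ofNat_ne_top
  have hGood : ∀ n (ω : Ω), ω ∈ G → firstLeft n ω → (Z ω n).1 = n := by
    intro n ω hG hfl
    have h2 := ((hfirstLeft n ω).1 hfl).2
    rw [hZ ω n]
    refine walk_fst_eq _ _ hG n fun k hk => ?_
    have := h2 k hk
    rwa [hZ ω (k+1), hZ ω k] at this
  -- the key identity for each n
  have hkey : ∀ n, μ (F n) = (1/2) * μ (E n) := by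
    intro n
    have h1 : F n ∩ G = (E n ∩ {ω | V (n : ℤ) ω = 1}) ∩ G := by
      ext ω
      simp only [hFdef, Set.mem_inter_iff, Set.mem_setOf_eq]
      constructor
      · rintro ⟨⟨hE, hV⟩, hG⟩
        refine ⟨⟨hE, ?_⟩, hG⟩
        rwa [hGood n ω hG hE.2] at hV
      · rintro ⟨⟨hE, hV⟩, hG⟩
        refine ⟨⟨hE, ?_⟩, hG⟩
        rwa [hGood n ω hG hE.2]
    calc μ (F n) = μ (F n ∩ G) := (measure_inter_conull hGc).symm
      _ = μ ((E n ∩ {ω | V (n : ℤ) ω = 1}) ∩ G) := by rw [h1]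
      _ = μ (E n ∩ {ω | V (n : ℤ) ω = 1}) := measure_inter_conull hGc
      _ = μ (E n) * μ {ω | V (n : ℤ) ω = 1} := by
          have hEA : E n = A ∩ {ω | firstLeft n ω} := rfl
          exact indep_key μ U V hUmeas hVmeas hindep n (E n) (hEA ▸ hA n)
      _ = (1/2) * μ (E n) := by rw [hV1 n, mul_comm]
  rw [hLeq, hReq, measure_iUnion hFdisj hFmeas, measure_iUnion hEdisj hEmeas]
  calc ∑' n, μ (F n) = ∑' n, (1/2) * μ (E n) := by simp only [hkey]
    _ = (1/2) * ∑' n, μ (E n) := ENNReal.tsum_mul_left
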